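/- arXiv:1908.07803 — 4 statements merged into one kernel-verified Lean document; each statement's English description precedes it below -/
import Mathlib

section
/- Let L be a real N×N matrix with zero row sums (L·𝟏 = 0, where 𝟏 is the all-ones vector) and nonpositive off-diagonal entries (L_{ij} ≤ 0 for all i ≠ j), and let r ∈ ℝ^N be an entrywise positive vector with rᵀL = 0. Set R = diag(r₁,…,r_N) and L̂ = RL + LᵀR. Then L̂ is symmetric, satisfies L̂·𝟏 = 0, has nonpositive off-diagonal entries, and is positive semidefinite. -/
open Matrix

/-- Structural part of Lemma 2: if `L` has zero row sums, nonpositive off-diagonal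
entries, and `r` is a positive left null vector of `L`, then with `R = diag r`,
the matrix `L̂ = R L + Lᵀ R` is symmetric, has zero row sums, nonpositive
off-diagonal entries, and is positive semidefinite. -/
theorem stmt_0 {N : ℕ} (hN : 1 ≤ N) (L : Matrix (Fin N) (Fin N) ℝ)
    (hrow : L.mulVec (1 : Fin N → ℝ) = 0)
    (hoff : ∀ i j : Fin N, i ≠ j → L i j ≤ 0)
    (r : Fin N → ℝ) (hr : ∀ i, 0 < r i)
    (hleft : Matrix.vecMul r L = 0) :
    (Matrix.diagonal r * L + Lᵀ * Matrix.diagonal r).IsSymm ∧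
    (Matrix.diagonal r * L + Lᵀ * Matrix.diagonal r).mulVec (1 : Fin N → ℝ) = 0 ∧
    (∀ i j : Fin N, i ≠ j → (Matrix.diagonal r * L + Lᵀ * Matrix.diagonal r) i j ≤ 0) ∧
    (Matrix.diagonal r * L + Lᵀ * Matrix.diagonal r).PosSemidef := by
  set A := Matrix.diagonal r * L + Lᵀ * Matrix.diagonal r with hA
  have hAentry : ∀ i j, A i j = r i * L i j + L j i * r j := by
    intro i j
    simp [hA, Matrix.add_apply, Matrix.diagonal_mul, Matrix.mul_diagonal,
      Matrix.transpose_apply]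
  have hLrow : ∀ i, ∑ j, L i j = 0 := by
    intro i
    have := congrFun hrow i
    simpa [Matrix.mulVec, dotProduct] using this
  have hLcol : ∀ j, ∑ i, r i * L i j = 0 := by
    intro j
    have := congrFun hleft j
    simpa [Matrix.vecMul, dotProduct] using this
  have hsym : A.IsSymm := by
    show Aᵀ = A
    rw [hA, Matrix.transpose_add, Matrix.transpose_mul, Matrix.transpose_mul,
      Matrix.diagonal_transpose, Matrix.transpose_transpose]
    exact add_comm _ _
  have hAsymm : ∀ i j, A i j = A j i := by
    intro i j
    exact congrFun (congrFun hsym j) i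
  have hArow : ∀ i, ∑ j, A i j = 0 := by
    intro i
    simp_rw [hAentry]
    rw [Finset.sum_add_distrib, ← Finset.mul_sum, hLrow i]
    have : ∑ j, L j i * r j = ∑ j, r j * L j i := by
      apply Finset.sum_congr rfl; intro j _; ring
    rw [this, hLcol i]
    ring
  have hmul : A.mulVec (1 : Fin N → ℝ) = 0 := by
    funext i
    simp [Matrix.mulVec, dotProduct, hArow i]
  have hoffA : ∀ i j : Fin N, i ≠ j → A i j ≤ 0 := by
    intro i j hij
    rw [hAentry]
    have h1 : r i * L i j ≤ 0 :=
      mul_nonpos_of_nonneg_of_nonpos (hr i).le (hoff i j hij)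
    have h2 : L j i * r j ≤ 0 :=
      mul_nonpos_of_nonpos_of_nonneg (hoff j i hij.symm) (hr j).le
    linarith
  refine ⟨hsym, hmul, hoffA, ?_⟩
  refine Matrix.PosSemidef.of_dotProduct_mulVec_nonneg ?_ ?_
  · show Aᴴ = A
    rw [Matrix.conjTranspose_eq_transpose_of_trivial]; exact hsym
  · intro x
    have hQ : star x ⬝ᵥ A.mulVec x = ∑ i, ∑ j, A i j * x i * x j := by
      simp [dotProduct, Matrix.mulVec, Finset.mul_sum]
      apply Finset.sum_congr rfl; intro i _
      apply Finset.sum_congr rfl; intro j _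
      ring
    have e1 : ∑ i, ∑ j, A i j * (x i)^2 = 0 := by
      apply Finset.sum_eq_zero; intro i _
      rw [← Finset.sum_mul, hArow i, zero_mul]
    have e2 : ∑ i, ∑ j, A i j * (x j)^2 = 0 := by
      rw [Finset.sum_comm]
      apply Finset.sum_eq_zero; intro j _
      have : ∑ i, A i j * (x j)^2 = (∑ i, A j i) * (x j)^2 := by
        rw [Finset.sum_mul]
        apply Finset.sum_congr rfl; intro i _
        rw [hAsymm i j]
      rw [this, hArow j, zero_mul]
    have key : 2 * (∑ i, ∑ j, A i j * x i * x j)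
        = ∑ i, ∑ j, (-(A i j)) * (x i - x j)^2 := by
      have expand : ∀ i j, (-(A i j)) * (x i - x j)^2
          = -(A i j * (x i)^2) + 2 * (A i j * x i * x j) - A i j * (x j)^2 := by
        intro i j; ring
      simp_rw [expand]
      rw [Finset.sum_congr rfl (fun i _ => Finset.sum_sub_distrib _ _),
        Finset.sum_sub_distrib _ _,
        Finset.sum_congr rfl (fun i _ => Finset.sum_add_distrib),
        Finset.sum_add_distrib]
      simp_rw [Finset.sum_neg_distrib, ← Finset.mul_sum]
      rw [e1, e2]
      ring
    have hterm : 0 ≤ ∑ i, ∑ j, (-(A i j)) * (x i - x j)^2 := by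
      apply Finset.sum_nonneg; intro i _
      apply Finset.sum_nonneg; intro j _
      by_cases h : i = j
      · subst h; simp
      · exact mul_nonneg (by linarith [hoffA i j h]) (sq_nonneg _)
    rw [hQ]
    simpa using (by linarith [key ▸ hterm] : (0:ℝ) ≤ ∑ i, ∑ j, A i j * x i * x j)
end

section
/- Let N ≥ 2 and let L̂ be a real symmetric positive semidefinite N×N matrix with L̂·𝟏 = 0 whose zero eigenvalue is simple (its kernel is exactly the span of 𝟏), and let λ₂(L̂) > 0 denote its second-smallest eigenvalue. Then for every entrywise positive vector ς ∈ ℝ^N and every nonzero υ ∈ ℝ^N with υᵀς = 0, one has υᵀL̂υ / (υᵀυ) > λ₂(L̂)/N. -/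
open Matrix

/-- Lemma 2, inequality (10): for a symmetric PSD matrix `L̂` with `L̂·𝟏 = 0` whose
kernel is exactly the span of `𝟏`, with `λ₂` its second-smallest eigenvalue
(characterized variationally as the greatest constant `c` with
`c·‖x‖² ≤ xᵀ L̂ x` for all `x ⊥ 𝟏`), every nonzero `υ` orthogonal to a positive
vector `ς` satisfies `υᵀL̂υ/(υᵀυ) > λ₂/N`. -/
theorem stmt_1 {N : ℕ} (hN : 2 ≤ N) (Lhat : Matrix (Fin N) (Fin N) ℝ)
    (hsym : Lhat.IsSymm) (hpsd : Lhat.PosSemidef)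
    (hrow : Lhat.mulVec (1 : Fin N → ℝ) = 0)
    (hker : ∀ x : Fin N → ℝ, Lhat.mulVec x = 0 → ∃ a : ℝ, x = fun _ => a)
    (lam2 : ℝ) (hlam2pos : 0 < lam2)
    (hlam2 : IsGreatest
      {c : ℝ | ∀ x : Fin N → ℝ, x ⬝ᵥ (1 : Fin N → ℝ) = 0 →
        c * (x ⬝ᵥ x) ≤ x ⬝ᵥ Lhat.mulVec x} lam2) :
    ∀ ς : Fin N → ℝ, (∀ i, 0 < ς i) →
      ∀ υ : Fin N → ℝ, υ ≠ 0 → υ ⬝ᵥ ς = 0 →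
        lam2 / N < (υ ⬝ᵥ Lhat.mulVec υ) / (υ ⬝ᵥ υ) := by
  intro ς hς υ hυ hperp
  have hNpos : (0:ℝ) < N := by positivity
  set S : ℝ := ∑ i, υ i with hS
  -- there exists j with υ j ≠ 0 and υ j * S ≤ 0
  have hneg : ∃ j, υ j < 0 := by
    by_contra h
    push_neg at h
    have : ∀ i, υ i = 0 := by
      intro i
      have hsum : ∑ i, υ i * ς i = 0 := hperp
      have hnn : ∀ i ∈ Finset.univ, 0 ≤ υ i * ς i := fun i _ =>
        mul_nonneg (h i) (hς i).le
      have := (Finset.sum_eq_zero_iff_of_nonneg hnn).1 hsum i (Finset.mem_univ i)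
      exact (mul_eq_zero.1 this).resolve_right (hς i).ne' |>.symm ▸ rfl
    exact hυ (funext this)
  have hpos : ∃ k, 0 < υ k := by
    by_contra h
    push_neg at h
    have : ∀ i, υ i = 0 := by
      intro i
      have hsum : ∑ i, υ i * ς i = 0 := hperp
      have hnn : ∀ i ∈ Finset.univ, 0 ≤ (-υ i) * ς i := fun i _ =>
        mul_nonneg (neg_nonneg.2 (h i)) (hς i).le
      have hsum' : ∑ i, (-υ i) * ς i = 0 := by
        simp [neg_mul, Finset.sum_neg_distrib, hsum]
      have := (Finset.sum_eq_zero_iff_of_nonneg hnn).1 hsum' i (Finset.mem_univ i)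
      have := (mul_eq_zero.1 this).resolve_right (hς i).ne'
      linarith
    exact hυ (funext this)
  obtain ⟨j, hj, hjS⟩ : ∃ j, υ j ≠ 0 ∧ υ j * S ≤ 0 := by
    rcases le_or_gt 0 S with hS0 | hS0
    · obtain ⟨j, hj⟩ := hneg
      exact ⟨j, hj.ne, mul_nonpos_of_nonpos_of_nonneg hj.le hS0⟩
    · obtain ⟨k, hk⟩ := hpos
      exact ⟨k, hk.ne', mul_nonpos_of_nonneg_of_nonpos hk.le hS0.le⟩
  -- key strict Cauchy inequality: S^2 < (N-1) * ∑ υ i ^2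
  have hCS : S ^ 2 < ((N:ℝ) - 1) * ∑ i, υ i ^ 2 := by
    have h1 : S ^ 2 < (S - υ j) ^ 2 := by nlinarith [sq_abs (υ j), abs_pos.2 hj]
    have h2 : S - υ j = ∑ i ∈ Finset.univ.erase j, υ i := by
      rw [hS, ← Finset.add_sum_erase _ _ (Finset.mem_univ j)]; ring
    have h3 : (∑ i ∈ Finset.univ.erase j, υ i) ^ 2 ≤
        ((N:ℝ) - 1) * ∑ i ∈ Finset.univ.erase j, υ i ^ 2 := by
      have := sq_sum_le_card_mul_sum_sq (s := Finset.univ.erase j) (f := υ)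
      have hcard : (Finset.univ.erase j).card = N - 1 := by
        simp [Finset.card_erase_of_mem]
      calc (∑ i ∈ Finset.univ.erase j, υ i) ^ 2
          ≤ ((Finset.univ.erase j).card : ℝ) * ∑ i ∈ Finset.univ.erase j, υ i ^ 2 := by
            exact_mod_cast this
        _ = ((N:ℝ) - 1) * ∑ i ∈ Finset.univ.erase j, υ i ^ 2 := by
            rw [hcard]; congr 1; push_cast [Nat.cast_sub (by omega : 1 ≤ N)]; ring
    have h4 : ∑ i ∈ Finset.univ.erase j, υ i ^ 2 ≤ ∑ i, υ i ^ 2 :=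
      Finset.sum_le_sum_of_subset_of_nonneg (Finset.erase_subset _ _)
        (fun i _ _ => sq_nonneg _)
    have hN1 : (0:ℝ) ≤ (N:ℝ) - 1 := by
      have : (1:ℝ) ≤ N := by exact_mod_cast (by omega : 1 ≤ N)
      linarith
    rw [h2] at h1
    calc S ^ 2 < (∑ i ∈ Finset.univ.erase j, υ i) ^ 2 := h1
      _ ≤ ((N:ℝ) - 1) * ∑ i ∈ Finset.univ.erase j, υ i ^ 2 := h3
      _ ≤ ((N:ℝ) - 1) * ∑ i, υ i ^ 2 := mul_le_mul_of_nonneg_left h4 hN1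
  have hυυ : υ ⬝ᵥ υ = ∑ i, υ i ^ 2 := by simp [dotProduct, sq]
  have hυυpos : 0 < υ ⬝ᵥ υ := by
    rw [hυυ]
    have : 0 < υ j ^ 2 := by positivity
    have : ∀ i ∈ Finset.univ, 0 ≤ υ i ^ 2 := fun i _ => sq_nonneg _
    exact Finset.sum_pos' this ⟨j, Finset.mem_univ j, by positivity⟩
  -- set x = υ - (S/N) • 1
  set x : Fin N → ℝ := fun i => υ i - S / N with hx
  have hx1 : x ⬝ᵥ (1 : Fin N → ℝ) = 0 := by
    simp [hx, dotProduct, Finset.sum_sub_distrib, ← hS]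
    field_simp
    ring
  have hxx : x ⬝ᵥ x = υ ⬝ᵥ υ - S ^ 2 / N := by
    simp only [hx, dotProduct]
    have : ∀ i, (υ i - S/N) * (υ i - S/N)
        = υ i * υ i - 2*(S/N)*υ i + (S/N)^2 := fun i => by ring
    rw [Finset.sum_congr rfl (fun i _ => this i)]
    rw [Finset.sum_add_distrib, Finset.sum_sub_distrib, ← Finset.mul_sum, ← hS]
    simp [Finset.card_univ]
    field_simp
    ring
  have hmul : Lhat.mulVec x = Lhat.mulVec υ := by
    have : x = υ + (-(S/N)) • (1 : Fin N → ℝ) := by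
      funext i; simp [hx]; ring
    rw [this, Matrix.mulVec_add, Matrix.mulVec_smul, hrow]
    simp
  have h1Lυ : (1 : Fin N → ℝ) ⬝ᵥ Lhat.mulVec υ = 0 := by
    rw [Matrix.dotProduct_mulVec, ← Matrix.mulVec_transpose, hsym.eq, hrow]
    simp
  have hxLx : x ⬝ᵥ Lhat.mulVec x = υ ⬝ᵥ Lhat.mulVec υ := by
    rw [hmul]
    have : x ⬝ᵥ Lhat.mulVec υ
        = υ ⬝ᵥ Lhat.mulVec υ - (S/N) * ((1 : Fin N → ℝ) ⬝ᵥ Lhat.mulVec υ) := by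
      simp only [hx, dotProduct, Pi.one_apply, one_mul, sub_mul,
        Finset.sum_sub_distrib, Finset.mul_sum]
    rw [this, h1Lυ]; ring
  have hlow := hlam2.1 x hx1
  rw [hxx, hxLx] at hlow
  rw [div_lt_div_iff₀ hNpos hυυpos] at *
  rw [hυυ] at *
  nlinarith [mul_le_mul_of_nonneg_right hlow hNpos.le, hCS, hlam2pos,
    div_mul_cancel₀ (S ^ 2) hNpos.ne', hυυpos]
end

section
/- Let N ≥ 2, let L be a real N×N matrix with L·𝟏 = 0, let r ∈ ℝ^N, W a real (N−1)×N matrix and U a real N×(N−1) matrix satisfying 𝟏rᵀ + UW = I_N, and suppose 𝒥 := W L U is invertible. Then I_N − 𝟏rᵀ = U·𝒥⁻¹·W·L. -/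
open Matrix

/-- Identity `I − 𝟏rᵀ = U 𝒥⁻¹ W L` (with `𝒥 = WLU` invertible) from the proof
of Theorem 2, where `L·𝟏 = 0` and `𝟏rᵀ + UW = I`. -/
theorem stmt_10 {N : ℕ} (hN : 2 ≤ N) (L : Matrix (Fin N) (Fin N) ℝ)
    (hL : L.mulVec (1 : Fin N → ℝ) = 0) (r : Fin N → ℝ)
    (W : Matrix (Fin (N - 1)) (Fin N) ℝ) (U : Matrix (Fin N) (Fin (N - 1)) ℝ)
    (h : Matrix.vecMulVec (1 : Fin N → ℝ) r + U * W = 1)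
    (hJ : IsUnit (W * L * U)) :
    (1 : Matrix (Fin N) (Fin N) ℝ) - Matrix.vecMulVec (1 : Fin N → ℝ) r =
      U * (W * L * U)⁻¹ * W * L := by
  have h1 : L * Matrix.vecMulVec (1 : Fin N → ℝ) r = 0 := by
    ext i j
    have hLi : L.mulVec (1 : Fin N → ℝ) i = 0 := by rw [hL]; rfl
    simp only [Matrix.mulVec, dotProduct, Pi.one_apply, mul_one] at hLi
    simp [Matrix.mul_apply, Matrix.vecMulVec_apply, ← Finset.sum_mul, hLi]
  have h2 : W * L = (W * L * U) * W := by
    calc W * L = W * L * (1 : Matrix (Fin N) (Fin N) ℝ) := by rw [Matrix.mul_one]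
    _ = W * L * (Matrix.vecMulVec (1 : Fin N → ℝ) r + U * W) := by rw [h]
    _ = W * (L * Matrix.vecMulVec (1 : Fin N → ℝ) r) + W * L * U * W := by
        rw [Matrix.mul_add, Matrix.mul_assoc W L, ← Matrix.mul_assoc (W * L) U W]
    _ = (W * L * U) * W := by rw [h1, Matrix.mul_zero, zero_add]
  have hinv : (W * L * U)⁻¹ * (W * L * U) = 1 :=
    Matrix.nonsing_inv_mul _ ((Matrix.isUnit_iff_isUnit_det _).mp hJ)
  calc (1 : Matrix (Fin N) (Fin N) ℝ) - Matrix.vecMulVec (1 : Fin N → ℝ) r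
      = U * W := by rw [← h]; abel
    _ = U * ((W * L * U)⁻¹ * ((W * L * U) * W)) := by
        rw [← Matrix.mul_assoc ((W * L * U)⁻¹), hinv, Matrix.one_mul]
    _ = U * (W * L * U)⁻¹ * W * L := by
        rw [← h2, ← Matrix.mul_assoc, Matrix.mul_assoc (U * (W * L * U)⁻¹) W L]
end

section
/- Let Q ≥ 0 and 0 < c < 1 be constants, and let z : (0,∞) → ℝ satisfy 0 ≤ z(t) ≤ Q for all t > 0. Let β : (0,∞) → ℝ be nonincreasing with β(t) → 0 as t → ∞, and let m : (0,∞) → ℝ be nonnegative and nonincreasing with m(t) → m_∞ as t → ∞. Suppose that for every t > 0, z(t) ≤ max{ β(t/4), c·z(t/2), m(t/4) }. Then for every δ > 0 there exists T > 0 such that z(t) ≤ m_∞ + δ for all t > T; in particular limsup_{t→∞} z(t) ≤ m_∞. -/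
open Filter Set

/-- Iterative contradiction argument (43)–(44) in the proof of Theorem 3: if
`0 ≤ z(t) ≤ Q` and `z(t) ≤ max{β(t/4), c·z(t/2), m(t/4)}` with `c < 1`, `β`
nonincreasing tending to `0`, and `m` nonnegative nonincreasing tending to
`m_∞`, then `z(t) ≤ m_∞ + δ` for all large `t`, and `limsup z ≤ m_∞`. -/
theorem stmt_15 (Q c : ℝ) (hQ : 0 ≤ Q) (hc0 : 0 < c) (hc1 : c < 1)
    (z β m : ℝ → ℝ) (hz : ∀ t : ℝ, 0 < t → 0 ≤ z t ∧ z t ≤ Q)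
    (hβmono : AntitoneOn β (Ioi 0)) (hβ : Tendsto β atTop (nhds 0))
    (hm0 : ∀ t : ℝ, 0 < t → 0 ≤ m t) (hmmono : AntitoneOn m (Ioi 0))
    (minf : ℝ) (hminf : Tendsto m atTop (nhds minf))
    (h : ∀ t : ℝ, 0 < t →
      z t ≤ max (max (β (t / 4)) (c * z (t / 2))) (m (t / 4))) :
    (∀ δ : ℝ, 0 < δ → ∃ T : ℝ, 0 < T ∧ ∀ t : ℝ, T < t → z t ≤ minf + δ) ∧
      limsup z atTop ≤ minf := by
  have hminf0 : 0 ≤ minf := by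
    apply ge_of_tendsto hminf
    filter_upwards [eventually_gt_atTop (0 : ℝ)] with t ht
    exact hm0 t ht
  have main : ∀ δ : ℝ, 0 < δ → ∃ T : ℝ, 0 < T ∧ ∀ t : ℝ, T < t → z t ≤ minf + δ := by
    intro δ hδ
    -- threshold from the limits
    have hβev : ∀ᶠ t in atTop, β t < δ := hβ.eventually (gt_mem_nhds hδ)
    have hmev : ∀ᶠ t in atTop, m t < minf + δ :=
      hminf.eventually (gt_mem_nhds (by linarith))
    obtain ⟨a, ha⟩ := (hβev.and hmev).exists_forall_of_atTop
    set T0 : ℝ := max a 1 with hT0def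
    have hT0pos : (0:ℝ) < T0 := lt_of_lt_of_le one_pos (le_max_right a 1)
    have hT0a : a ≤ T0 := le_max_left a 1
    -- iterate
    have claim : ∀ n : ℕ, ∀ t : ℝ, 4 * T0 * 2 ^ n < t →
        z t ≤ max (minf + δ) (c ^ n * Q) := by
      intro n
      induction n with
      | zero =>
        intro t ht
        have ht0 : 0 < t := lt_trans (by positivity) ht
        have := (hz t ht0).2
        simp only [pow_zero, one_mul]
        exact le_max_of_le_right this
      | succ n IH =>
        intro t ht
        have h2 : (1:ℝ) ≤ 2 ^ (n+1) := one_le_pow₀ (by norm_num)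
        have ht0 : 0 < t := lt_trans (by positivity) ht
        have ht4 : a ≤ t / 4 := by
          have : T0 ≤ t / 4 := by
            have : T0 * 1 ≤ T0 * 2 ^ (n+1) := by
              exact mul_le_mul_of_nonneg_left h2 (le_of_lt hT0pos)
            nlinarith
          linarith
        have hβb : β (t / 4) < δ := (ha (t/4) ht4).1
        have hmb : m (t / 4) < minf + δ := (ha (t/4) ht4).2
        have ht2 : 4 * T0 * 2 ^ n < t / 2 := by
          have : 4 * T0 * 2 ^ (n+1) = 2 * (4 * T0 * 2 ^ n) := by ring
          linarith [ht.trans_le (le_refl t), this ▸ ht]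
        have hz2 := IH (t/2) ht2
        have hcz : c * z (t/2) ≤ max (minf + δ) (c ^ (n+1) * Q) := by
          have := mul_le_mul_of_nonneg_left hz2 (le_of_lt hc0)
          rcases le_max_iff.mp hz2 with h1 | h1
          · have : c * z (t/2) ≤ c * (minf + δ) :=
              mul_le_mul_of_nonneg_left h1 (le_of_lt hc0)
            have h3 : c * (minf + δ) ≤ minf + δ := by nlinarith
            exact le_max_of_le_left (this.trans h3)
          · have : c * z (t/2) ≤ c * (c ^ n * Q) :=
              mul_le_mul_of_nonneg_left h1 (le_of_lt hc0)
            have h3 : c * (c ^ n * Q) = c ^ (n+1) * Q := by ring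
            exact le_max_of_le_right (h3 ▸ this)
        have := h t ht0
        have hbb : β (t/4) ≤ max (minf + δ) (c ^ (n+1) * Q) :=
          le_max_of_le_left (by linarith)
        have hmm : m (t/4) ≤ max (minf + δ) (c ^ (n+1) * Q) :=
          le_max_of_le_left (le_of_lt hmb)
        calc z t ≤ max (max (β (t / 4)) (c * z (t / 2))) (m (t / 4)) := this
          _ ≤ max (minf + δ) (c ^ (n+1) * Q) := by
              exact max_le (max_le hbb hcz) hmm
    -- choose n with c^n * Q < δ
    obtain ⟨n, hn⟩ := exists_pow_lt_of_lt_one (show (0:ℝ) < δ / (Q+1) by positivity) hc1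
    have hnQ : c ^ n * Q < δ := by
      have hc : 0 < c ^ n := pow_pos hc0 n
      have : c ^ n * (Q + 1) < δ := by
        have := mul_lt_mul_of_pos_right hn (show (0:ℝ) < Q + 1 by linarith)
        calc c ^ n * (Q+1) < δ / (Q+1) * (Q+1) := this
          _ = δ := by field_simp
      nlinarith
    refine ⟨4 * T0 * 2 ^ n, by positivity, fun t ht => ?_⟩
    have := claim n t ht
    have : z t ≤ max (minf + δ) (c ^ n * Q) := this
    rcases le_max_iff.mp this with h1 | h1
    · exact h1
    · linarith
  refine ⟨main, ?_⟩
  have hbound : IsCoboundedUnder (· ≤ ·) atTop z := by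
    apply Filter.IsBoundedUnder.isCoboundedUnder_le
    apply isBoundedUnder_of_eventually_ge (a := (0:ℝ))
    filter_upwards [eventually_gt_atTop (0 : ℝ)] with t ht
    exact (hz t ht).1
  apply le_of_forall_pos_le_add
  intro ε hε
  obtain ⟨T, hT, hTz⟩ := main ε hε
  apply limsup_le_of_le hbound
  filter_upwards [eventually_gt_atTop T] with t ht
  exact hTz t ht
end
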